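/- For a pointed space (X,x), the path-space fibration p : PX → X, p(ω) = ω(1), where PX = {ω : I → X : ω(0) = x} with the compact-open topology, induces an isomorphism of quasitopological groups π_n^{qtop}(X,x) ≅ π_{n−1}^{qtop}(Ω(X,x), e_x) for all n ≥ 2, and a bijection π_1^{qtop}(X,x) ≅ π_0^{qtop}(Ω(X,x)). -/

import Mathlib

open Topology.Homotopy unitInterval

noncomputable section

/-- The quotient topology on `πₙ(X,x)` making it `πₙ^{qtop}(X,x)`. -/
instance piQTop (N X : Type*) [TopologicalSpace X] (x : X) :
    TopologicalSpace (HomotopyGroup N X x) :=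
  inferInstanceAs (TopologicalSpace (Quotient _))

/-- The quotient topology on `π₀(X)` (path components), making it `π₀^{qtop}(X)`. -/
instance pi0QTop (X : Type*) [TopologicalSpace X] :
    TopologicalSpace (ZerothHomotopy X) :=
  inferInstanceAs (TopologicalSpace (Quotient _))

section
open Topology Topology.Homotopy unitInterval GenLoop


namespace Stmt16Aux

variable {X : Type} [TopologicalSpace X] {x : X} {m : ℕ}

def app (m : ℕ) (s : I^(Fin 1)) (t : I^(Fin (m+1))) : I^(Fin (m+2)) :=
  fun i => Fin.append s t (Fin.cast (by ring) i)

def tpart (y : I^(Fin (m+2))) : I^(Fin (m+1)) :=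
  fun j => y (Fin.cast (by omega) (Fin.natAdd 1 j))

def spart (y : I^(Fin (m+2))) : I^(Fin 1) :=
  fun k => y (Fin.cast (by omega) (Fin.castAdd (m+1) k))

lemma cast_cast {a b : ℕ} (h1 : a = b) (h2 : b = a) (z : Fin a) :
    Fin.cast h2 (Fin.cast h1 z) = z := by ext; simp

lemma app_spart_tpart (y : I^(Fin (m+2))) : app m (spart y) (tpart y) = y := by
  funext i
  show Fin.append (spart y) (tpart y) (Fin.cast (by omega) i) = y i
  have key : ∀ j : Fin (1 + (m+1)), Fin.append (spart y) (tpart y) j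
      = y (Fin.cast (by omega) j) := by
    intro j
    induction j using Fin.addCases with
    | left k => rw [Fin.append_left]; rfl
    | right j => rw [Fin.append_right]; rfl
  rw [key, cast_cast]

lemma app_castAdd (s : I^(Fin 1)) (t : I^(Fin (m+1))) (k : Fin 1) :
    app m s t (Fin.cast (by omega) (Fin.castAdd (m+1) k)) = s k := by
  simp only [app]
  rw [cast_cast, Fin.append_left]

lemma app_natAdd (s : I^(Fin 1)) (t : I^(Fin (m+1))) (j : Fin (m+1)) :
    app m s t (Fin.cast (by omega) (Fin.natAdd 1 j)) = t j := by
  simp only [app]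
  rw [cast_cast, Fin.append_right]

lemma tpart_app (s : I^(Fin 1)) (t : I^(Fin (m+1))) : tpart (app m s t) = t := by
  funext j
  simp only [tpart]
  exact app_natAdd s t j

lemma spart_app (s : I^(Fin 1)) (t : I^(Fin (m+1))) : spart (app m s t) = s := by
  funext k
  simp only [spart]
  exact app_castAdd s t k

lemma continuous_app : Continuous fun p : (I^(Fin (m+1))) × (I^(Fin 1)) => app m p.2 p.1 := by
  refine continuous_pi fun i => ?_
  show Continuous fun p : (I^(Fin (m+1))) × (I^(Fin 1)) => Fin.append p.2 p.1 (Fin.cast (by omega) i)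
  refine Fin.addCases (motive := fun j =>
    Continuous fun p : (I^(Fin (m+1))) × (I^(Fin 1)) => Fin.append p.2 p.1 j) ?_ ?_ _
  · intro k
    simp only [Fin.append_left]
    exact (continuous_apply k).comp continuous_snd
  · intro j
    simp only [Fin.append_right]
    exact (continuous_apply j).comp continuous_fst

lemma continuous_tpart : Continuous (tpart (m := m)) :=
  continuous_pi fun _ => continuous_apply _

lemma continuous_spart : Continuous (spart (m := m)) :=
  continuous_pi fun _ => continuous_apply _

lemma app_mem_boundary_left {s : I^(Fin 1)} (hs : s ∈ Cube.boundary (Fin 1))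
    (t : I^(Fin (m+1))) : app m s t ∈ Cube.boundary (Fin (m+2)) := by
  obtain ⟨k, hk⟩ := hs
  refine ⟨Fin.cast (by omega) (Fin.castAdd (m+1) k), ?_⟩
  rwa [app_castAdd]

lemma app_mem_boundary_right {t : I^(Fin (m+1))} (ht : t ∈ Cube.boundary (Fin (m+1)))
    (s : I^(Fin 1)) : app m s t ∈ Cube.boundary (Fin (m+2)) := by
  obtain ⟨j, hj⟩ := ht
  refine ⟨Fin.cast (by omega) (Fin.natAdd 1 j), ?_⟩
  rwa [app_natAdd]

lemma boundary_cases {y : I^(Fin (m+2))} (hy : y ∈ Cube.boundary (Fin (m+2))) :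
    spart y ∈ Cube.boundary (Fin 1) ∨ tpart y ∈ Cube.boundary (Fin (m+1)) := by
  obtain ⟨i, hi⟩ := hy
  rcases lt_or_ge i.val 1 with h | h
  · left
    refine ⟨⟨i.val, h⟩, ?_⟩
    have : Fin.cast (by omega : 1 + (m+1) = m + 2) (Fin.castAdd (m+1) ⟨i.val, h⟩) = i :=
      Fin.ext rfl
    simp only [spart]
    rwa [this]
  · right
    refine ⟨⟨i.val - 1, by omega⟩, ?_⟩
    have : Fin.cast (by omega : 1 + (m+1) = m + 2) (Fin.natAdd 1 ⟨i.val - 1, by omega⟩) = i :=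
      Fin.ext (by simp; omega)
    simp only [tpart]
    rwa [this]

def toMapAux (f : Ω^ (Fin (m+2)) X x) : C((I^(Fin (m+1))) × (I^(Fin 1)), X) :=
  ⟨fun p => f (app m p.2 p.1), f.1.continuous.comp continuous_app⟩

def toMap (f : Ω^ (Fin (m+2)) X x) : Ω^ (Fin (m+1)) (Ω^ (Fin 1) X x) GenLoop.const :=
  ⟨⟨fun t => ⟨(toMapAux f).curry t, fun s hs => f.2 _ (app_mem_boundary_left hs t)⟩,
    ((toMapAux f).curry.continuous).subtype_mk _⟩,
   fun t ht => GenLoop.ext _ _ fun s => f.2 _ (app_mem_boundary_right ht s)⟩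

@[simp] lemma toMap_apply (f : Ω^ (Fin (m+2)) X x) (t : I^(Fin (m+1))) (s : I^(Fin 1)) :
    toMap f t s = f (app m s t) := rfl

def fromMap (g : Ω^ (Fin (m+1)) (Ω^ (Fin 1) X x) GenLoop.const) : Ω^ (Fin (m+2)) X x :=
  ⟨⟨fun y => g (tpart y) (spart y),
    continuous_eval.comp ((((map_continuous g.1).comp continuous_tpart)).prodMk
      continuous_spart)⟩,
   fun y hy => by
    rcases boundary_cases hy with h | h
    · exact (g (tpart y)).2 _ h
    · show g (tpart y) (spart y) = x
      rw [show g (tpart y) = GenLoop.const from g.2 _ h]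
      rfl⟩

@[simp] lemma fromMap_apply (g : Ω^ (Fin (m+1)) (Ω^ (Fin 1) X x) GenLoop.const)
    (y : I^(Fin (m+2))) : fromMap g y = g (tpart y) (spart y) := rfl

lemma from_to (f : Ω^ (Fin (m+2)) X x) : fromMap (toMap f) = f :=
  GenLoop.ext _ _ fun y => by
    rw [fromMap_apply, toMap_apply]
    exact congrArg (fun z => f z) (app_spart_tpart y)

lemma to_from (g : Ω^ (Fin (m+1)) (Ω^ (Fin 1) X x) GenLoop.const) : toMap (fromMap g) = g :=
  GenLoop.ext _ _ fun t => GenLoop.ext _ _ fun s => by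
    rw [toMap_apply, fromMap_apply, tpart_app, spart_app]

lemma continuous_toMap : Continuous (toMap (x := x) (m := m)) := by
  refine Continuous.subtype_mk ?_ _
  refine ContinuousMap.continuous_of_continuous_uncurry _ ?_
  refine Continuous.subtype_mk ?_ _
  refine ContinuousMap.continuous_of_continuous_uncurry _ ?_
  show Continuous fun q : ((Ω^ (Fin (m+2)) X x) × (I^(Fin (m+1)))) × (I^(Fin 1)) =>
    q.1.1 (app m q.2 q.1.2)
  exact continuous_eval.comp (continuous_fst.fst.prodMk
    (continuous_app.comp (continuous_fst.snd.prodMk continuous_snd)))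

lemma continuous_fromMap : Continuous (fromMap (x := x) (m := m)) := by
  refine Continuous.subtype_mk ?_ _
  refine ContinuousMap.continuous_of_continuous_uncurry _ ?_
  show Continuous fun p : (Ω^ (Fin (m+1)) (Ω^ (Fin 1) X x) GenLoop.const) × (I^(Fin (m+2))) =>
    p.1 (tpart p.2) (spart p.2)
  exact continuous_eval.comp ((continuous_eval.comp (continuous_fst.prodMk
    (continuous_tpart.comp continuous_snd))).prodMk (continuous_spart.comp continuous_snd))

lemma homotopic_iff (f f' : Ω^ (Fin (m+2)) X x) :
    GenLoop.Homotopic f f' ↔ GenLoop.Homotopic (toMap f) (toMap f') := by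
  constructor
  · rintro ⟨H⟩
    refine ⟨?_⟩
    have Lcont : Continuous fun q : ((I × (I^(Fin (m+1)))) × (I^(Fin 1))) =>
        H (q.1.1, app m q.2 q.1.2) :=
      H.continuous.comp (continuous_fst.fst.prodMk
        (continuous_app.comp (continuous_fst.snd.prodMk continuous_snd)))
    set L : C((I × (I^(Fin (m+1)))) × (I^(Fin 1)), X) := ⟨_, Lcont⟩ with hL
    refine ⟨⟨⟨fun p => ⟨L.curry p, fun s hs => ?_⟩, (L.curry.continuous).subtype_mk _⟩,
      fun t => ?_, fun t => ?_⟩, fun τ t ht => ?_⟩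
    · show H (p.1, app m s p.2) = x
      rw [H.eq_fst _ (app_mem_boundary_left hs p.2)]
      exact f.2 _ (app_mem_boundary_left hs p.2)
    · exact GenLoop.ext _ _ fun s => H.apply_zero _
    · exact GenLoop.ext _ _ fun s => H.apply_one _
    · exact GenLoop.ext _ _ fun s => H.eq_fst τ (app_mem_boundary_right ht s)
  · rintro ⟨G⟩
    refine ⟨?_⟩
    refine ⟨⟨⟨fun p => G (p.1, tpart p.2) (spart p.2), ?_⟩, fun y => ?_, fun y => ?_⟩,
      fun τ y hy => ?_⟩
    · exact continuous_eval.comp ((G.continuous.comp (continuous_fst.prodMk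
        (continuous_tpart.comp continuous_snd))).prodMk (continuous_spart.comp continuous_snd))
    · show G (0, tpart y) (spart y) = f y
      rw [G.apply_zero]
      show f (app m (spart y) (tpart y)) = f y
      exact congrArg (fun z => f z) (app_spart_tpart y)
    · show G (1, tpart y) (spart y) = f' y
      rw [G.apply_one]
      show f' (app m (spart y) (tpart y)) = f' y
      exact congrArg (fun z => f' z) (app_spart_tpart y)
    · show G (τ, tpart y) (spart y) = f y
      rcases boundary_cases hy with h | h
      · exact ((G (τ, tpart y)).2 _ h).trans (f.2 _ hy).symm
      · rw [G.eq_fst τ h]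
        show f (app m (spart y) (tpart y)) = f y
        exact congrArg (fun z => f z) (app_spart_tpart y)

lemma app_one (s : I^(Fin 1)) (t : I^(Fin (m+1))) :
    app m s t ⟨1, by omega⟩ = t 0 := by
  have h1 : (⟨1, by omega⟩ : Fin (m+2)) = Fin.cast (by omega) (Fin.natAdd 1 (0 : Fin (m+1))) :=
    Fin.ext rfl
  rw [h1, app_natAdd]

lemma update_app (s : I^(Fin 1)) (t : I^(Fin (m+1))) (v : I) :
    Function.update (app m s t) (⟨1, by omega⟩ : Fin (m+2)) v
      = app m s (Function.update t 0 v) := by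
  funext i
  rcases eq_or_ne i ⟨1, by omega⟩ with rfl | hne
  · rw [Function.update_self]
    have h1 : (⟨1, by omega⟩ : Fin (m+2)) = Fin.cast (by omega) (Fin.natAdd 1 (0 : Fin (m+1))) :=
      Fin.ext rfl
    rw [h1, app_natAdd, Function.update_self]
  · rw [Function.update_of_ne hne]
    show Fin.append s t (Fin.cast (by omega) i)
      = Fin.append s (Function.update t 0 v) (Fin.cast (by omega) i)
    have hj : Fin.cast (by omega : m + 2 = 1 + (m+1)) i ≠ Fin.natAdd 1 (0 : Fin (m+1)) := by
      intro hcon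
      exact hne (Fin.ext (by simpa [Fin.ext_iff] using hcon))
    generalize Fin.cast (by omega : m + 2 = 1 + (m+1)) i = j at hj
    induction j using Fin.addCases with
    | left k => rw [Fin.append_left, Fin.append_left]
    | right j' =>
      rw [Fin.append_right, Fin.append_right, Function.update_of_ne]
      intro hcon
      exact hj (by rw [hcon])

lemma toMap_transAt (q p : Ω^ (Fin (m+2)) X x) :
    toMap (GenLoop.transAt (⟨1, by omega⟩ : Fin (m+2)) q p)
      = GenLoop.transAt (0 : Fin (m+1)) (toMap q) (toMap p) :=
  GenLoop.ext _ _ fun t => GenLoop.ext _ _ fun s => by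
    show GenLoop.transAt (⟨1, by omega⟩ : Fin (m+2)) q p (app m s t)
      = GenLoop.transAt (0 : Fin (m+1)) (toMap q) (toMap p) t s
    simp only [GenLoop.transAt, GenLoop.coe_copy]
    rw [app_one]
    split_ifs with h
    · rw [update_app]
      rfl
    · rw [update_app]
      rfl

def eQuot (m : ℕ) (X : Type) [TopologicalSpace X] (x : X) :
    HomotopyGroup (Fin (m+2)) X x ≃ HomotopyGroup (Fin (m+1)) (Ω^ (Fin 1) X x) GenLoop.const where
  toFun := Quotient.map' toMap fun f f' h => (homotopic_iff f f').mp h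
  invFun := Quotient.map' fromMap fun g g' h => (homotopic_iff _ _).mpr (by rwa [to_from, to_from])
  left_inv := Quotient.ind fun f => congrArg (Quotient.mk _) (from_to f)
  right_inv := Quotient.ind fun g => congrArg (Quotient.mk _) (to_from g)

lemma eQuot_mk (f : Ω^ (Fin (m+2)) X x) : eQuot m X x ⟦f⟧ = ⟦toMap f⟧ := rfl

lemma isHomeomorph_eQuot : IsHomeomorph (eQuot m X x) := by
  have h1 : Continuous (eQuot m X x) :=
    Continuous.quotient_map' continuous_toMap fun f f' h => (homotopic_iff f f').mp h
  have h2 : Continuous (eQuot m X x).symm :=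
    Continuous.quotient_map' continuous_fromMap fun g g' h =>
      (homotopic_iff _ _).mpr (by rwa [to_from, to_from])
  exact Homeomorph.isHomeomorph ⟨eQuot m X x, h1, h2⟩

lemma eQuot_mul (a b : HomotopyGroup (Fin (m+2)) X x) :
    eQuot m X x (a * b) = eQuot m X x a * eQuot m X x b := by
  induction a using Quotient.ind with | _ p =>
  induction b using Quotient.ind with | _ q =>
  have h1 : ((· * ·) : _ → _ → HomotopyGroup (Fin (m+2)) X x) ⟦p⟧ ⟦q⟧
      = ⟦GenLoop.transAt ⟨1, by omega⟩ q p⟧ := HomotopyGroup.mul_spec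
  have h2 : ((· * ·) : _ → _ → HomotopyGroup (Fin (m+1)) (Ω^ (Fin 1) X x) GenLoop.const)
      ⟦toMap p⟧ ⟦toMap q⟧
      = ⟦GenLoop.transAt 0 (toMap q) (toMap p)⟧ := HomotopyGroup.mul_spec
  exact (congrArg (eQuot m X x) h1).trans ((congrArg (fun z => (⟦z⟧ : HomotopyGroup (Fin (m+1)) (Ω^ (Fin 1) X x) GenLoop.const)) (toMap_transAt q p)).trans h2.symm)

lemma joined_of_homotopic {f g : Ω^ (Fin 1) X x} (h : GenLoop.Homotopic f g) : Joined f g := by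
  obtain ⟨H⟩ := h
  exact ⟨⟨⟨fun τ => ⟨H.toContinuousMap.curry τ, fun s hs => (H.eq_fst τ hs).trans (f.2 s hs)⟩,
    (H.toContinuousMap.curry.continuous).subtype_mk _⟩,
    GenLoop.ext _ _ fun s => H.apply_zero s, GenLoop.ext _ _ fun s => H.apply_one s⟩⟩

lemma homotopic_of_joined {f g : Ω^ (Fin 1) X x} (h : Joined f g) : GenLoop.Homotopic f g := by
  obtain ⟨γ⟩ := h
  exact ⟨⟨⟨⟨fun p => γ p.1 p.2,
    continuous_eval.comp ((γ.continuous.comp continuous_fst).prodMk continuous_snd)⟩,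
    fun s => by show γ 0 s = f s; rw [γ.source],
    fun s => by show γ 1 s = g s; rw [γ.target]⟩,
    fun τ s hs => ((γ τ).2 s hs).trans (f.2 s hs).symm⟩⟩

def e1 (X : Type) [TopologicalSpace X] (x : X) :
    HomotopyGroup (Fin 1) X x ≃ ZerothHomotopy (Ω^ (Fin 1) X x) where
  toFun := Quotient.map' id fun _ _ h => joined_of_homotopic h
  invFun := Quotient.map' id fun _ _ h => homotopic_of_joined h
  left_inv := Quotient.ind fun _ => rfl
  right_inv := Quotient.ind fun _ => rfl

end Stmt16Aux
end

/-- For a pointed space `(X,x)`, the path-space fibration `p : PX → X`, `p(ω) = ω(1)`,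
with contractible total space `PX` and fiber the loop space `Ω(X,x)` (modelled as
`GenLoop (Fin 1) X x` with the compact-open topology), induces an isomorphism of
quasitopological groups `πₙ^{qtop}(X,x) ≅ π_{n-1}^{qtop}(Ω(X,x), e_x)` for all `n ≥ 2`
(written `n = m + 2`), given on representatives by currying off the loop coordinate,
and a bijection `π₁^{qtop}(X,x) ≅ π₀^{qtop}(Ω(X,x))` sending the homotopy class of a
loop to its path component. -/
theorem stmt16 (X : Type) [TopologicalSpace X] (x : X) :
    (∀ m : ℕ, ∃ e : HomotopyGroup (Fin (m + 2)) X x ≃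
        HomotopyGroup (Fin (m + 1)) (GenLoop (Fin 1) X x) GenLoop.const,
      (∀ (f : GenLoop (Fin (m + 2)) X x)
        (g : GenLoop (Fin (m + 1)) (GenLoop (Fin 1) X x) GenLoop.const),
        (∀ (t : Fin (m + 1) → I) (s : Fin 1 → I),
          (g t) s = f (fun i => Fin.append s t (Fin.cast (by omega) i))) →
        e ⟦f⟧ = ⟦g⟧) ∧
      (∀ a b, e (a * b) = e a * e b) ∧ IsHomeomorph e) ∧
    ∃ e₁ : HomotopyGroup (Fin 1) X x ≃ ZerothHomotopy (GenLoop (Fin 1) X x),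
      ∀ γ : GenLoop (Fin 1) X x, e₁ ⟦γ⟧ = ⟦γ⟧ := by
  constructor
  · intro m
    refine ⟨Stmt16Aux.eQuot m X x, ?_, Stmt16Aux.eQuot_mul, Stmt16Aux.isHomeomorph_eQuot⟩
    intro f g hg
    have hgf : g = Stmt16Aux.toMap f :=
      GenLoop.ext _ _ fun t => GenLoop.ext _ _ fun s => hg t s
    rw [hgf]
    rfl
  · exact ⟨Stmt16Aux.e1 X x, fun γ => rfl⟩
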